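/- Let n : ℕ. The map v ↦ (2·x, 2·y, 2·u, 2·t), where x, y, u, t are the four real coordinate vectors of v, is a homeomorphism from the subspace S := {v : Fin (n+1) → ℍ | ∑ a, normSq (v a) = 1 and ν(v) = 0} of Fin (n+1) → ℍ (with the product topology) onto the real Stiefel manifold T := {(a, b, c, d) : (Fin (n+1) → ℝ)⁴ | a, b, c, d are pairwise orthogonal for the Euclidean dot product and each has Euclidean norm 1} of orthonormal 4-frames in ℝ^{n+1}. (This realizes the Stiefel manifold Ṽ₄(ℝ^{n+1}) as the sphere-level zero set of the Sp(1)-moment map, as in Theorem 3.2 (ii) and Corollary 3.3.) -/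

import Mathlib

open Quaternion Finset

/-- The imaginary units `i`, `j`, `k` of the quaternions. -/
noncomputable def qi : Quaternion ℝ := ⟨0, 1, 0, 0⟩
noncomputable def qj : Quaternion ℝ := ⟨0, 0, 1, 0⟩
noncomputable def qk : Quaternion ℝ := ⟨0, 0, 0, 1⟩

/-- The sphere-level zero set of the `Sp(1)`-moment map `ν`. -/
def Sset (n : ℕ) : Set (Fin (n + 1) → Quaternion ℝ) :=
  {v | (∑ a, Quaternion.normSq (v a)) = 1 ∧
    (∑ a, star (v a) * qi * v a) = 0 ∧ (∑ a, star (v a) * qj * v a) = 0 ∧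
    (∑ a, star (v a) * qk * v a) = 0}

/-- The real Stiefel manifold of orthonormal 4-frames in `ℝ^{n+1}`. -/
def Tset (n : ℕ) :
    Set ((Fin (n + 1) → ℝ) × (Fin (n + 1) → ℝ) × (Fin (n + 1) → ℝ) × (Fin (n + 1) → ℝ)) :=
  {p | (∑ a, p.1 a * p.2.1 a) = 0 ∧ (∑ a, p.1 a * p.2.2.1 a) = 0 ∧
    (∑ a, p.1 a * p.2.2.2 a) = 0 ∧ (∑ a, p.2.1 a * p.2.2.1 a) = 0 ∧
    (∑ a, p.2.1 a * p.2.2.2 a) = 0 ∧ (∑ a, p.2.2.1 a * p.2.2.2 a) = 0 ∧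
    (∑ a, p.1 a ^ 2) = 1 ∧ (∑ a, p.2.1 a ^ 2) = 1 ∧
    (∑ a, p.2.2.1 a ^ 2) = 1 ∧ (∑ a, p.2.2.2 a ^ 2) = 1}

namespace StmtAux

@[simp] lemma mk_re (a b c d : ℝ) : (⟨a, b, c, d⟩ : Quaternion ℝ).re = a := rfl
@[simp] lemma mk_imI (a b c d : ℝ) : (⟨a, b, c, d⟩ : Quaternion ℝ).imI = b := rfl
@[simp] lemma mk_imJ (a b c d : ℝ) : (⟨a, b, c, d⟩ : Quaternion ℝ).imJ = c := rfl
@[simp] lemma mk_imK (a b c d : ℝ) : (⟨a, b, c, d⟩ : Quaternion ℝ).imK = d := rfl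

lemma muli (q : Quaternion ℝ) : star q * qi * q =
    ⟨0, q.re ^ 2 + q.imI ^ 2 - q.imJ ^ 2 - q.imK ^ 2,
      2 * (q.imI * q.imJ) - 2 * (q.re * q.imK), 2 * (q.re * q.imJ) + 2 * (q.imI * q.imK)⟩ := by
  ext <;> simp only [Quaternion.re_mul, Quaternion.imI_mul, Quaternion.imJ_mul,
    Quaternion.imK_mul] <;> simp [qi] <;> ring

lemma mulj (q : Quaternion ℝ) : star q * qj * q =
    ⟨0, 2 * (q.re * q.imK) + 2 * (q.imI * q.imJ),
      q.re ^ 2 - q.imI ^ 2 + q.imJ ^ 2 - q.imK ^ 2,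
      2 * (q.imJ * q.imK) - 2 * (q.re * q.imI)⟩ := by
  ext <;> simp only [Quaternion.re_mul, Quaternion.imI_mul, Quaternion.imJ_mul,
    Quaternion.imK_mul] <;> simp [qj] <;> ring

lemma mulk (q : Quaternion ℝ) : star q * qk * q =
    ⟨0, 2 * (q.imI * q.imK) - 2 * (q.re * q.imJ),
      2 * (q.re * q.imI) + 2 * (q.imJ * q.imK),
      q.re ^ 2 - q.imI ^ 2 - q.imJ ^ 2 + q.imK ^ 2⟩ := by
  ext <;> simp only [Quaternion.re_mul, Quaternion.imI_mul, Quaternion.imJ_mul,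
    Quaternion.imK_mul] <;> simp [qk] <;> ring

lemma sum_re {m : ℕ} (f : Fin m → Quaternion ℝ) : (∑ a, f a).re = ∑ a, (f a).re :=
  map_sum (QuaternionAlgebra.reₗ (-1 : ℝ) (0 : ℝ) (-1 : ℝ)) f univ
lemma sum_imI {m : ℕ} (f : Fin m → Quaternion ℝ) : (∑ a, f a).imI = ∑ a, (f a).imI :=
  map_sum (QuaternionAlgebra.imIₗ (-1 : ℝ) (0 : ℝ) (-1 : ℝ)) f univ
lemma sum_imJ {m : ℕ} (f : Fin m → Quaternion ℝ) : (∑ a, f a).imJ = ∑ a, (f a).imJ :=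
  map_sum (QuaternionAlgebra.imJₗ (-1 : ℝ) (0 : ℝ) (-1 : ℝ)) f univ
lemma sum_imK {m : ℕ} (f : Fin m → Quaternion ℝ) : (∑ a, f a).imK = ∑ a, (f a).imK :=
  map_sum (QuaternionAlgebra.imKₗ (-1 : ℝ) (0 : ℝ) (-1 : ℝ)) f univ

lemma sum_as {m : ℕ} (F f g h k : Fin m → ℝ) (c1 c2 c3 c4 : ℝ)
    (hterm : ∀ a, F a = c1 * f a + c2 * g a + c3 * h a + c4 * k a) :
    ∑ a, F a = c1 * (∑ a, f a) + c2 * (∑ a, g a) + c3 * (∑ a, h a) + c4 * (∑ a, k a) := by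
  simp_rw [Finset.mul_sum, ← Finset.sum_add_distrib]
  exact Finset.sum_congr rfl fun a _ => hterm a

section forward
variable {n : ℕ} (v : Fin (n + 1) → Quaternion ℝ)

set_option maxHeartbeats 2000000 in
lemma mem_T (hv : v ∈ Sset n) :
    ((fun a => 2 * (v a).re, fun a => 2 * (v a).imI,
      fun a => 2 * (v a).imJ, fun a => 2 * (v a).imK) :
      (Fin (n + 1) → ℝ) × (Fin (n + 1) → ℝ) × (Fin (n + 1) → ℝ) × (Fin (n + 1) → ℝ))
      ∈ Tset n := by
  obtain ⟨hn, hI, hJ, hK⟩ := hv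
  -- atomic sums
  have E0 : 1 * (∑ a, (v a).re ^ 2) + 1 * (∑ a, (v a).imI ^ 2) + 1 * (∑ a, (v a).imJ ^ 2)
      + 1 * (∑ a, (v a).imK ^ 2) = 1 :=
    (sum_as _ _ _ _ _ 1 1 1 1 fun a => by rw [Quaternion.normSq_def']; ring).symm.trans hn
  have rI1 : ∑ a, (star (v a) * qi * v a).imI = 0 := by
    have h := congrArg QuaternionAlgebra.imI hI; rw [sum_imI] at h; simpa using h
  have rI2 : ∑ a, (star (v a) * qi * v a).imJ = 0 := by
    have h := congrArg QuaternionAlgebra.imJ hI; rw [sum_imJ] at h; simpa using h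
  have rI3 : ∑ a, (star (v a) * qi * v a).imK = 0 := by
    have h := congrArg QuaternionAlgebra.imK hI; rw [sum_imK] at h; simpa using h
  have rJ1 : ∑ a, (star (v a) * qj * v a).imI = 0 := by
    have h := congrArg QuaternionAlgebra.imI hJ; rw [sum_imI] at h; simpa using h
  have rJ2 : ∑ a, (star (v a) * qj * v a).imJ = 0 := by
    have h := congrArg QuaternionAlgebra.imJ hJ; rw [sum_imJ] at h; simpa using h
  have rJ3 : ∑ a, (star (v a) * qj * v a).imK = 0 := by
    have h := congrArg QuaternionAlgebra.imK hJ; rw [sum_imK] at h; simpa using h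
  have rK1 : ∑ a, (star (v a) * qk * v a).imI = 0 := by
    have h := congrArg QuaternionAlgebra.imI hK; rw [sum_imI] at h; simpa using h
  have rK2 : ∑ a, (star (v a) * qk * v a).imJ = 0 := by
    have h := congrArg QuaternionAlgebra.imJ hK; rw [sum_imJ] at h; simpa using h
  have rK3 : ∑ a, (star (v a) * qk * v a).imK = 0 := by
    have h := congrArg QuaternionAlgebra.imK hK; rw [sum_imK] at h; simpa using h
  have EI1 : 1 * (∑ a, (v a).re ^ 2) + 1 * (∑ a, (v a).imI ^ 2)
      + (-1) * (∑ a, (v a).imJ ^ 2) + (-1) * (∑ a, (v a).imK ^ 2) = 0 :=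
    (sum_as _ _ _ _ _ 1 1 (-1) (-1) fun a => by simp only [muli, mk_imI]; ring).symm.trans rI1
  have EI2 : 2 * (∑ a, (v a).imI * (v a).imJ) + (-2) * (∑ a, (v a).re * (v a).imK)
      + 0 * (∑ a, (v a).re ^ 2) + 0 * (∑ a, (v a).re ^ 2) = 0 :=
    (sum_as _ _ _ _ _ 2 (-2) 0 0 fun a => by simp only [muli, mk_imJ]; ring).symm.trans rI2
  have EI3 : 2 * (∑ a, (v a).re * (v a).imJ) + 2 * (∑ a, (v a).imI * (v a).imK)
      + 0 * (∑ a, (v a).re ^ 2) + 0 * (∑ a, (v a).re ^ 2) = 0 :=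
    (sum_as _ _ _ _ _ 2 2 0 0 fun a => by simp only [muli, mk_imK]; ring).symm.trans rI3
  have EJ1 : 2 * (∑ a, (v a).re * (v a).imK) + 2 * (∑ a, (v a).imI * (v a).imJ)
      + 0 * (∑ a, (v a).re ^ 2) + 0 * (∑ a, (v a).re ^ 2) = 0 :=
    (sum_as _ _ _ _ _ 2 2 0 0 fun a => by simp only [mulj, mk_imI]; ring).symm.trans rJ1
  have EJ2 : 1 * (∑ a, (v a).re ^ 2) + (-1) * (∑ a, (v a).imI ^ 2)
      + 1 * (∑ a, (v a).imJ ^ 2) + (-1) * (∑ a, (v a).imK ^ 2) = 0 :=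
    (sum_as _ _ _ _ _ 1 (-1) 1 (-1) fun a => by simp only [mulj, mk_imJ]; ring).symm.trans rJ2
  have EJ3 : 2 * (∑ a, (v a).imJ * (v a).imK) + (-2) * (∑ a, (v a).re * (v a).imI)
      + 0 * (∑ a, (v a).re ^ 2) + 0 * (∑ a, (v a).re ^ 2) = 0 :=
    (sum_as _ _ _ _ _ 2 (-2) 0 0 fun a => by simp only [mulj, mk_imK]; ring).symm.trans rJ3
  have EK1 : 2 * (∑ a, (v a).imI * (v a).imK) + (-2) * (∑ a, (v a).re * (v a).imJ)
      + 0 * (∑ a, (v a).re ^ 2) + 0 * (∑ a, (v a).re ^ 2) = 0 :=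
    (sum_as _ _ _ _ _ 2 (-2) 0 0 fun a => by simp only [mulk, mk_imI]; ring).symm.trans rK1
  have EK2 : 2 * (∑ a, (v a).re * (v a).imI) + 2 * (∑ a, (v a).imJ * (v a).imK)
      + 0 * (∑ a, (v a).re ^ 2) + 0 * (∑ a, (v a).re ^ 2) = 0 :=
    (sum_as _ _ _ _ _ 2 2 0 0 fun a => by simp only [mulk, mk_imJ]; ring).symm.trans rK2
  have EK3 : 1 * (∑ a, (v a).re ^ 2) + (-1) * (∑ a, (v a).imI ^ 2)
      + (-1) * (∑ a, (v a).imJ ^ 2) + 1 * (∑ a, (v a).imK ^ 2) = 0 :=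
    (sum_as _ _ _ _ _ 1 (-1) (-1) 1 fun a => by simp only [mulk, mk_imK]; ring).symm.trans rK3
  refine ⟨?_, ?_, ?_, ?_, ?_, ?_, ?_, ?_, ?_, ?_⟩
  · exact (sum_as _ (fun a => (v a).re * (v a).imI) (fun a => (v a).re ^ 2)
      (fun a => (v a).re ^ 2) (fun a => (v a).re ^ 2) 4 0 0 0 fun a => by ring).trans
      (by linarith)
  · exact (sum_as _ (fun a => (v a).re * (v a).imJ) (fun a => (v a).re ^ 2)
      (fun a => (v a).re ^ 2) (fun a => (v a).re ^ 2) 4 0 0 0 fun a => by ring).trans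
      (by linarith)
  · exact (sum_as _ (fun a => (v a).re * (v a).imK) (fun a => (v a).re ^ 2)
      (fun a => (v a).re ^ 2) (fun a => (v a).re ^ 2) 4 0 0 0 fun a => by ring).trans
      (by linarith)
  · exact (sum_as _ (fun a => (v a).imI * (v a).imJ) (fun a => (v a).re ^ 2)
      (fun a => (v a).re ^ 2) (fun a => (v a).re ^ 2) 4 0 0 0 fun a => by ring).trans
      (by linarith)
  · exact (sum_as _ (fun a => (v a).imI * (v a).imK) (fun a => (v a).re ^ 2)
      (fun a => (v a).re ^ 2) (fun a => (v a).re ^ 2) 4 0 0 0 fun a => by ring).trans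
      (by linarith)
  · exact (sum_as _ (fun a => (v a).imJ * (v a).imK) (fun a => (v a).re ^ 2)
      (fun a => (v a).re ^ 2) (fun a => (v a).re ^ 2) 4 0 0 0 fun a => by ring).trans
      (by linarith)
  · exact (sum_as _ (fun a => (v a).re ^ 2) (fun a => (v a).re ^ 2)
      (fun a => (v a).re ^ 2) (fun a => (v a).re ^ 2) 4 0 0 0 fun a => by ring).trans
      (by linarith)
  · exact (sum_as _ (fun a => (v a).imI ^ 2) (fun a => (v a).re ^ 2)
      (fun a => (v a).re ^ 2) (fun a => (v a).re ^ 2) 4 0 0 0 fun a => by ring).trans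
      (by linarith)
  · exact (sum_as _ (fun a => (v a).imJ ^ 2) (fun a => (v a).re ^ 2)
      (fun a => (v a).re ^ 2) (fun a => (v a).re ^ 2) 4 0 0 0 fun a => by ring).trans
      (by linarith)
  · exact (sum_as _ (fun a => (v a).imK ^ 2) (fun a => (v a).re ^ 2)
      (fun a => (v a).re ^ 2) (fun a => (v a).re ^ 2) 4 0 0 0 fun a => by ring).trans
      (by linarith)

end forward

section backward
variable {n : ℕ}
  (p : (Fin (n + 1) → ℝ) × (Fin (n + 1) → ℝ) × (Fin (n + 1) → ℝ) × (Fin (n + 1) → ℝ))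

set_option maxHeartbeats 2000000 in
lemma mem_S (hp : p ∈ Tset n) :
    (fun a => (⟨p.1 a / 2, p.2.1 a / 2, p.2.2.1 a / 2, p.2.2.2 a / 2⟩ : Quaternion ℝ))
      ∈ Sset n := by
  obtain ⟨h12, h13, h14, h23, h24, h34, h1, h2, h3, h4⟩ := hp
  refine ⟨?_, ?_, ?_, ?_⟩
  · exact (sum_as _ (fun a => p.1 a ^ 2) (fun a => p.2.1 a ^ 2) (fun a => p.2.2.1 a ^ 2)
      (fun a => p.2.2.2 a ^ 2) (1/4) (1/4) (1/4) (1/4)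
      fun a => by erw [Quaternion.normSq_def']; simp only [mk_re, mk_imI, mk_imJ, mk_imK]; ring
      ).trans (by linarith)
  · apply Quaternion.ext <;>
      [rw [sum_re]; rw [sum_imI]; rw [sum_imJ]; rw [sum_imK]] <;>
      simp only [Quaternion.re_zero, Quaternion.imI_zero, Quaternion.imJ_zero,
        Quaternion.imK_zero]
    · exact (sum_as _ (fun a => p.1 a ^ 2) (fun a => p.1 a ^ 2) (fun a => p.1 a ^ 2)
        (fun a => p.1 a ^ 2) 0 0 0 0 fun a => by
          erw [muli]; simp only [mk_re, mk_imI, mk_imJ, mk_imK]; ring).trans (by linarith)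
    · exact (sum_as _ (fun a => p.1 a ^ 2) (fun a => p.2.1 a ^ 2) (fun a => p.2.2.1 a ^ 2)
        (fun a => p.2.2.2 a ^ 2) (1/4) (1/4) (-(1/4)) (-(1/4)) fun a => by
          erw [muli]; simp only [mk_re, mk_imI, mk_imJ, mk_imK]; ring).trans (by linarith)
    · exact (sum_as _ (fun a => p.2.1 a * p.2.2.1 a) (fun a => p.1 a * p.2.2.2 a)
        (fun a => p.1 a ^ 2) (fun a => p.1 a ^ 2) (1/2) (-(1/2)) 0 0 fun a => by
          erw [muli]; simp only [mk_re, mk_imI, mk_imJ, mk_imK]; ring).trans (by linarith)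
    · exact (sum_as _ (fun a => p.1 a * p.2.2.1 a) (fun a => p.2.1 a * p.2.2.2 a)
        (fun a => p.1 a ^ 2) (fun a => p.1 a ^ 2) (1/2) (1/2) 0 0 fun a => by
          erw [muli]; simp only [mk_re, mk_imI, mk_imJ, mk_imK]; ring).trans (by linarith)
  · apply Quaternion.ext <;>
      [rw [sum_re]; rw [sum_imI]; rw [sum_imJ]; rw [sum_imK]] <;>
      simp only [Quaternion.re_zero, Quaternion.imI_zero, Quaternion.imJ_zero,
        Quaternion.imK_zero]
    · exact (sum_as _ (fun a => p.1 a ^ 2) (fun a => p.1 a ^ 2) (fun a => p.1 a ^ 2)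
        (fun a => p.1 a ^ 2) 0 0 0 0 fun a => by
          erw [mulj]; simp only [mk_re, mk_imI, mk_imJ, mk_imK]; ring).trans (by linarith)
    · exact (sum_as _ (fun a => p.1 a * p.2.2.2 a) (fun a => p.2.1 a * p.2.2.1 a)
        (fun a => p.1 a ^ 2) (fun a => p.1 a ^ 2) (1/2) (1/2) 0 0 fun a => by
          erw [mulj]; simp only [mk_re, mk_imI, mk_imJ, mk_imK]; ring).trans (by linarith)
    · exact (sum_as _ (fun a => p.1 a ^ 2) (fun a => p.2.1 a ^ 2) (fun a => p.2.2.1 a ^ 2)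
        (fun a => p.2.2.2 a ^ 2) (1/4) (-(1/4)) (1/4) (-(1/4)) fun a => by
          erw [mulj]; simp only [mk_re, mk_imI, mk_imJ, mk_imK]; ring).trans (by linarith)
    · exact (sum_as _ (fun a => p.2.2.1 a * p.2.2.2 a) (fun a => p.1 a * p.2.1 a)
        (fun a => p.1 a ^ 2) (fun a => p.1 a ^ 2) (1/2) (-(1/2)) 0 0 fun a => by
          erw [mulj]; simp only [mk_re, mk_imI, mk_imJ, mk_imK]; ring).trans (by linarith)
  · apply Quaternion.ext <;>
      [rw [sum_re]; rw [sum_imI]; rw [sum_imJ]; rw [sum_imK]] <;>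
      simp only [Quaternion.re_zero, Quaternion.imI_zero, Quaternion.imJ_zero,
        Quaternion.imK_zero]
    · exact (sum_as _ (fun a => p.1 a ^ 2) (fun a => p.1 a ^ 2) (fun a => p.1 a ^ 2)
        (fun a => p.1 a ^ 2) 0 0 0 0 fun a => by
          erw [mulk]; simp only [mk_re, mk_imI, mk_imJ, mk_imK]; ring).trans (by linarith)
    · exact (sum_as _ (fun a => p.2.1 a * p.2.2.2 a) (fun a => p.1 a * p.2.2.1 a)
        (fun a => p.1 a ^ 2) (fun a => p.1 a ^ 2) (1/2) (-(1/2)) 0 0 fun a => by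
          erw [mulk]; simp only [mk_re, mk_imI, mk_imJ, mk_imK]; ring).trans (by linarith)
    · exact (sum_as _ (fun a => p.1 a * p.2.1 a) (fun a => p.2.2.1 a * p.2.2.2 a)
        (fun a => p.1 a ^ 2) (fun a => p.1 a ^ 2) (1/2) (1/2) 0 0 fun a => by
          erw [mulk]; simp only [mk_re, mk_imI, mk_imJ, mk_imK]; ring).trans (by linarith)
    · exact (sum_as _ (fun a => p.1 a ^ 2) (fun a => p.2.1 a ^ 2) (fun a => p.2.2.1 a ^ 2)
        (fun a => p.2.2.2 a ^ 2) (1/4) (-(1/4)) (-(1/4)) (1/4) fun a => by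
          erw [mulk]; simp only [mk_re, mk_imI, mk_imJ, mk_imK]; ring).trans (by linarith)

end backward

lemma mk_eq (a b c d : ℝ) :
    (⟨a, b, c, d⟩ : Quaternion ℝ) = (a : Quaternion ℝ) + b • qi + c • qj + d • qk := by
  ext <;> simp only [Quaternion.re_add, Quaternion.imI_add, Quaternion.imJ_add,
    Quaternion.imK_add, Quaternion.re_smul, Quaternion.imI_smul, Quaternion.imJ_smul,
    Quaternion.imK_smul] <;> simp [qi, qj, qk]

end StmtAux

open StmtAux in
/-- The map `v ↦ (2x, 2y, 2u, 2t)` on the four real coordinate vectors of `v` is a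
homeomorphism from the sphere-level zero set of the `Sp(1)`-moment map onto the real
Stiefel manifold `Ṽ₄(ℝ^{n+1})`. -/
theorem stmt_5 (n : ℕ) :
    ∃ e : Sset n ≃ₜ Tset n,
      ∀ v : Sset n,
        (e v : (Fin (n + 1) → ℝ) × (Fin (n + 1) → ℝ) × (Fin (n + 1) → ℝ) × (Fin (n + 1) → ℝ)) =
          (fun a => 2 * (v.1 a).re, fun a => 2 * (v.1 a).imI,
            fun a => 2 * (v.1 a).imJ, fun a => 2 * (v.1 a).imK) := by
  refine ⟨⟨⟨fun v => ⟨_, mem_T v.1 v.2⟩, fun p => ⟨_, mem_S p.1 p.2⟩, ?_, ?_⟩, ?_, ?_⟩,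
    fun v => rfl⟩
  · intro v
    refine Subtype.ext (funext fun a => ?_)
    apply Quaternion.ext <;> dsimp <;> ring
  · intro p
    refine Subtype.ext ?_
    obtain ⟨⟨a, b, c, d⟩, hp⟩ := p
    refine Prod.ext ?_ (Prod.ext ?_ (Prod.ext ?_ ?_)) <;> funext i <;> dsimp <;> ring
  · apply Continuous.subtype_mk
    have hre : Continuous fun v : Sset n => fun a => 2 * (v.1 a).re :=
      continuous_pi fun a => continuous_const.mul
        (Quaternion.continuous_re.comp ((continuous_apply a).comp continuous_subtype_val))
    have himI : Continuous fun v : Sset n => fun a => 2 * (v.1 a).imI :=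
      continuous_pi fun a => continuous_const.mul
        (Quaternion.continuous_imI.comp ((continuous_apply a).comp continuous_subtype_val))
    have himJ : Continuous fun v : Sset n => fun a => 2 * (v.1 a).imJ :=
      continuous_pi fun a => continuous_const.mul
        (Quaternion.continuous_imJ.comp ((continuous_apply a).comp continuous_subtype_val))
    have himK : Continuous fun v : Sset n => fun a => 2 * (v.1 a).imK :=
      continuous_pi fun a => continuous_const.mul
        (Quaternion.continuous_imK.comp ((continuous_apply a).comp continuous_subtype_val))
    exact hre.prodMk (himI.prodMk (himJ.prodMk himK))
  · have key : Continuous fun p : Tset n => fun a : Fin (n + 1) =>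
        ((p.1.1 a / 2 : ℝ) : Quaternion ℝ) + (p.1.2.1 a / 2) • qi + (p.1.2.2.1 a / 2) • qj
          + (p.1.2.2.2 a / 2) • qk := by
      refine continuous_pi fun a => ?_
      have c1 : Continuous fun p : Tset n => p.1.1 a / 2 :=
        ((continuous_apply a).comp ((continuous_fst).comp continuous_subtype_val)).div_const 2
      have c2 : Continuous fun p : Tset n => p.1.2.1 a / 2 :=
        ((continuous_apply a).comp (continuous_fst.comp
          (continuous_snd.comp continuous_subtype_val))).div_const 2
      have c3 : Continuous fun p : Tset n => p.1.2.2.1 a / 2 :=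
        ((continuous_apply a).comp (continuous_fst.comp (continuous_snd.comp
          (continuous_snd.comp continuous_subtype_val)))).div_const 2
      have c4 : Continuous fun p : Tset n => p.1.2.2.2 a / 2 :=
        ((continuous_apply a).comp (continuous_snd.comp (continuous_snd.comp
          (continuous_snd.comp continuous_subtype_val)))).div_const 2
      exact (((Quaternion.continuous_coe.comp c1).add (c2.smul continuous_const)).add
        (c3.smul continuous_const)).add (c4.smul continuous_const)
    exact (key.congr fun p => funext fun a => (mk_eq _ _ _ _).symm).subtype_mk _
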